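/- arXiv:2601.10483 — 2 statements merged into one kernel-verified Lean document; each statement's English description precedes it below -/
import Mathlib

section
/- Let U : ℝ^N → ℝ be a continuous coercive function (U(x) → ∞ as ‖x‖ → ∞) such that e^{−U} is Lebesgue-integrable. Then U attains its infimum, the set S = argmin U is nonempty and compact, e^{−βU} is integrable for every β ≥ 1, and the Gibbs probability measures μ_β with density proportional to e^{−β U(x)} concentrate on S as β → ∞: for every open set O containing S, μ_β(ℝ^N \ O) → 0 as β → ∞. -/
open MeasureTheory Filter Topology

/-- **Zero-temperature concentration of Gibbs measures.** Let `U : ℝ^N → ℝ` be continuous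
and coercive with `e^{-U}` Lebesgue-integrable. Then `U` attains its infimum, the set
`S = argmin U` is nonempty and compact, `e^{-βU}` is integrable for every `β ≥ 1`, the
Gibbs measures `μ_β` with density proportional to `e^{-βU}` are probability measures,
and they concentrate on `S` as `β → ∞`: for every open set `O ⊇ S`,
`μ_β (Oᶜ) → 0` as `β → ∞`. -/
theorem gibbs_measure_zero_temperature_concentration
    (N : ℕ) (U : (Fin N → ℝ) → ℝ) (hU : Continuous U)
    (hcoer : Tendsto U (Filter.comap norm atTop) atTop)
    (hint : Integrable (fun x => Real.exp (-U x))) :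
    ({x | ∀ y, U x ≤ U y} : Set (Fin N → ℝ)).Nonempty ∧
    IsCompact ({x | ∀ y, U x ≤ U y} : Set (Fin N → ℝ)) ∧
    (∀ β : ℝ, 1 ≤ β → Integrable (fun x => Real.exp (-β * U x))) ∧
    (∀ β : ℝ, 1 ≤ β → IsProbabilityMeasure
      (volume.withDensity fun x =>
        ENNReal.ofReal (Real.exp (-β * U x) / ∫ y, Real.exp (-β * U y)))) ∧
    (∀ O : Set (Fin N → ℝ), IsOpen O → {x | ∀ y, U x ≤ U y} ⊆ O →
      Tendsto (fun β : ℝ =>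
        (volume.withDensity fun x =>
          ENNReal.ofReal (Real.exp (-β * U x) / ∫ y, Real.exp (-β * U y))) Oᶜ)
        atTop (𝓝 0)) := by
  have hcoco : Tendsto U (cocompact _) atTop :=
    hcoer.mono_left (Filter.map_le_iff_le_comap.mp tendsto_norm_cocompact_atTop)
  obtain ⟨x₀, hx₀⟩ := hU.exists_forall_le hcoco
  set m := U x₀ with hm
  -- the argmin set
  have hSeq : {x | ∀ y, U x ≤ U y} = U ⁻¹' Set.Iic m := by
    ext x
    constructor
    · intro hx; exact hx x₀
    · intro hx y; exact le_trans hx (hx₀ y)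
  -- sublevel sets are compact
  have hsub : ∀ c : ℝ, IsCompact (U ⁻¹' Set.Iic c) := by
    intro c
    have hev : ∀ᶠ x in Filter.comap norm atTop, c < U x :=
      hcoer.eventually (eventually_gt_atTop c)
    rw [Filter.eventually_comap] at hev
    obtain ⟨R, hR⟩ := eventually_atTop.mp hev
    have hsubset : U ⁻¹' Set.Iic c ⊆ Metric.closedBall 0 R := by
      intro x hx
      rw [Metric.mem_closedBall, dist_zero_right]
      by_contra hcon
      push_neg at hcon
      exact absurd (hR ‖x‖ hcon.le x rfl) (not_lt.mpr hx)
    exact (isCompact_closedBall 0 R).of_isClosed_subset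
      (isClosed_Iic.preimage hU) hsubset
  have hScompact : IsCompact ({x | ∀ y, U x ≤ U y} : Set (Fin N → ℝ)) := by
    rw [hSeq]; exact hsub m
  -- integrability
  have hm_le : ∀ x, m ≤ U x := hx₀
  have hint_beta : ∀ β : ℝ, 1 ≤ β → Integrable (fun x => Real.exp (-β * U x)) := by
    intro β hβ
    have hmeas : AEStronglyMeasurable (fun x => Real.exp (-β * U x)) volume :=
      (Real.continuous_exp.comp ((continuous_const.mul hU))).aestronglyMeasurable
    refine (hint.const_mul (Real.exp (-(β - 1) * m))).mono' hmeas ?_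
    refine Filter.Eventually.of_forall fun x => ?_
    rw [Real.norm_eq_abs, abs_of_pos (Real.exp_pos _), ← Real.exp_add]
    apply Real.exp_le_exp.mpr
    nlinarith [hm_le x]
  -- positivity of the partition function
  have hne : NeZero (volume : Measure (Fin N → ℝ)) :=
    ⟨Measure.measure_univ_ne_zero.mp (IsOpen.measure_ne_zero volume isOpen_univ Set.univ_nonempty)⟩
  have hZpos : ∀ β : ℝ, 1 ≤ β → 0 < ∫ x, Real.exp (-β * U x) := by
    intro β hβ
    exact integral_exp_pos (hint_beta β hβ)
  -- probability measures
  have hprob : ∀ β : ℝ, 1 ≤ β → IsProbabilityMeasure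
      (volume.withDensity fun x =>
        ENNReal.ofReal (Real.exp (-β * U x) / ∫ y, Real.exp (-β * U y))) := by
    intro β hβ
    constructor
    rw [withDensity_apply _ MeasurableSet.univ, Measure.restrict_univ,
      ← ofReal_integral_eq_lintegral_ofReal ((hint_beta β hβ).div_const _)
        (Filter.Eventually.of_forall fun x => by positivity)]
    rw [integral_div, div_self (hZpos β hβ).ne']
    simp
  refine ⟨⟨x₀, hx₀⟩, hScompact, hint_beta, hprob, ?_⟩
  -- concentration
  intro O hO hSO
  -- separation: U ≥ m + δ on Oᶜ
  obtain ⟨δ, hδpos, hδO⟩ :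
      ∃ δ : ℝ, 0 < δ ∧ ∀ x ∈ Oᶜ, m + δ ≤ U x := by
    set T := U ⁻¹' Set.Iic (m + 1) ∩ Oᶜ with hT
    have hTcompact : IsCompact T :=
      (hsub (m + 1)).inter_right hO.isClosed_compl
    rcases T.eq_empty_or_nonempty with hTe | hTne
    · refine ⟨1, one_pos, fun x hx => ?_⟩
      by_contra hcon
      push_neg at hcon
      exact absurd (by have hxT : x ∈ T := ⟨hcon.le, hx⟩; rwa [hTe] at hxT : x ∈ (∅ : Set (Fin N → ℝ))) (Set.notMem_empty x)
    · obtain ⟨z, hzT, hz⟩ := hTcompact.exists_isMinOn hTne hU.continuousOn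
      have hzO : z ∈ Oᶜ := hzT.2
      have hzm : m < U z := by
        rcases lt_or_ge m (U z) with h | h
        · exact h
        · exfalso
          exact hzO (hSO (fun y => le_trans h (hm_le y)))
      refine ⟨U z - m, by linarith, fun x hx => ?_⟩
      rcases le_or_gt (U x) (m + 1) with h | h
      · have := hz (⟨h, hx⟩ : x ∈ T); simp only [Set.mem_setOf_eq] at this; linarith
      · have : U z ≤ m + 1 := hzT.1
        linarith
  -- a small ball where U < m + δ/2
  have hopen : IsOpen {x | U x < m + δ / 2} := isOpen_lt hU continuous_const
  have hx₀mem : x₀ ∈ {x | U x < m + δ / 2} := by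
    simp only [Set.mem_setOf_eq]; linarith
  obtain ⟨r, hrpos, hrsub⟩ := Metric.isOpen_iff.mp hopen x₀ hx₀mem
  set v := (volume (Metric.ball x₀ r)).toReal with hv
  have hvpos : 0 < v := by
    rw [hv]
    refine ENNReal.toReal_pos ?_ ?_
    · exact (Metric.measure_ball_pos volume x₀ hrpos).ne'
    · exact measure_ball_lt_top.ne
  set C := ∫ x, Real.exp (-U x) with hC
  set Z := fun β : ℝ => ∫ x, Real.exp (-β * U x) with hZ
  set A := fun β : ℝ => ∫ x in Oᶜ, Real.exp (-β * U x) with hA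
  have hOc : MeasurableSet (Oᶜ : Set (Fin N → ℝ)) := hO.measurableSet.compl
  -- lower bound on Z
  have hZlow : ∀ β : ℝ, 1 ≤ β → Real.exp (-β * (m + δ / 2)) * v ≤ Z β := by
    intro β hβ
    have h1 : ∫ x in Metric.ball x₀ r, Real.exp (-β * (m + δ / 2))
        = Real.exp (-β * (m + δ / 2)) * v := by
      rw [setIntegral_const, smul_eq_mul, mul_comm]; rfl
    calc Real.exp (-β * (m + δ / 2)) * v
        = ∫ x in Metric.ball x₀ r, Real.exp (-β * (m + δ / 2)) := h1.symm
      _ ≤ ∫ x in Metric.ball x₀ r, Real.exp (-β * U x) := by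
          refine setIntegral_mono_on
            (integrableOn_const measure_ball_lt_top.ne)
            ((hint_beta β hβ).integrableOn) measurableSet_ball fun x hx => ?_
          have hxU : U x < m + δ / 2 := hrsub hx
          apply Real.exp_le_exp.mpr
          nlinarith
      _ ≤ Z β := setIntegral_le_integral (hint_beta β hβ)
            (Filter.Eventually.of_forall fun x => (Real.exp_pos _).le)
  -- upper bound on A
  have hAup : ∀ β : ℝ, 1 ≤ β → A β ≤ Real.exp (-(β - 1) * (m + δ)) * C := by
    intro β hβ
    calc A β ≤ ∫ x in Oᶜ, Real.exp (-(β - 1) * (m + δ)) * Real.exp (-U x) := by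
          refine setIntegral_mono_on ((hint_beta β hβ).integrableOn)
            ((hint.const_mul _).integrableOn) hOc fun x hx => ?_
          rw [← Real.exp_add]
          apply Real.exp_le_exp.mpr
          have := hδO x hx
          nlinarith
      _ ≤ ∫ x, Real.exp (-(β - 1) * (m + δ)) * Real.exp (-U x) :=
          setIntegral_le_integral (hint.const_mul _)
            (Filter.Eventually.of_forall fun x => by positivity)
      _ = Real.exp (-(β - 1) * (m + δ)) * C := integral_const_mul _ _
  have hAnn : ∀ β : ℝ, 0 ≤ A β :=
    fun β => setIntegral_nonneg hOc fun x _ => (Real.exp_pos _).le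
  -- the explicit bound
  set bound := fun β : ℝ => (C / v * Real.exp (m + δ)) * Real.exp (-(β * (δ / 2)))
    with hbound
  have hkey : ∀ β : ℝ, 1 ≤ β → A β / Z β ≤ bound β := by
    intro β hβ
    have h2 : A β / Z β ≤ (Real.exp (-(β - 1) * (m + δ)) * C)
        / (Real.exp (-β * (m + δ / 2)) * v) := by
      apply div_le_div₀ (by positivity) (hAup β hβ)
        (by positivity) (hZlow β hβ)
    refine h2.trans (le_of_eq ?_)
    have hveq : v ≠ 0 := hvpos.ne'
    have hE : Real.exp (m + δ) * Real.exp (-(β * (δ / 2))) * Real.exp (-β * (m + δ / 2))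
        = Real.exp (-(β - 1) * (m + δ)) := by
      rw [← Real.exp_add, ← Real.exp_add]; congr 1; ring
    rw [hbound, div_eq_iff (by positivity : (0:ℝ) < Real.exp (-β * (m + δ / 2)) * v).ne']
    have hre : C / v * Real.exp (m + δ) * Real.exp (-(β * (δ / 2)))
        * (Real.exp (-β * (m + δ / 2)) * v)
        = (C / v * v) * (Real.exp (m + δ) * Real.exp (-(β * (δ / 2)))
            * Real.exp (-β * (m + δ / 2))) := by ring
    rw [hre, hE, div_mul_cancel₀ C hveq, mul_comm]
  -- tendsto of the bound
  have hbt : Tendsto bound atTop (𝓝 0) := by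
    rw [hbound]
    have h1 : Tendsto (fun β : ℝ => β * (δ / 2)) atTop atTop :=
      Tendsto.atTop_mul_const (by positivity) tendsto_id
    have h2 : Tendsto (fun β : ℝ => Real.exp (-(β * (δ / 2)))) atTop (𝓝 0) :=
      Real.tendsto_exp_neg_atTop_nhds_zero.comp h1
    simpa using h2.const_mul (C / v * Real.exp (m + δ))
  -- identification of the measure of Oᶜ
  have heq : ∀ᶠ β : ℝ in atTop,
      (volume.withDensity fun x =>
        ENNReal.ofReal (Real.exp (-β * U x) / ∫ y, Real.exp (-β * U y))) Oᶜ
      = ENNReal.ofReal (A β / Z β) := by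
    filter_upwards [eventually_ge_atTop (1 : ℝ)] with β hβ
    rw [withDensity_apply _ hOc,
      ← ofReal_integral_eq_lintegral_ofReal
        (((hint_beta β hβ).div_const _).integrableOn)
        (Filter.Eventually.of_forall fun x => by positivity),
      integral_div]
  -- squeeze
  have hmain : Tendsto (fun β : ℝ => ENNReal.ofReal (A β / Z β)) atTop (𝓝 0) := by
    have hup : Tendsto (fun β : ℝ => ENNReal.ofReal (bound β)) atTop (𝓝 0) := by
      have := ENNReal.tendsto_ofReal hbt
      simpa using this
    refine tendsto_of_tendsto_of_tendsto_of_le_of_le' tendsto_const_nhds hup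
      (Filter.Eventually.of_forall fun β => zero_le) ?_
    filter_upwards [eventually_ge_atTop (1 : ℝ)] with β hβ
    exact ENNReal.ofReal_le_ofReal (hkey β hβ)
  exact hmain.congr' (Filter.EventuallyEq.symm heq)
end

section
/- Let σ be the standard semicircle probability distribution on [−2, 2], with density σ(x) = √(4 − x²)/(2π). Fix κ* ∈ (0, 1), and for κ ∈ (κ*, 1] let ω̃(κ) ∈ [−2, 2] be the unique solution of σ([ω̃(κ), 2]) = (κ − κ*)/(1 − κ*), and define the interpolation threshold α_inter(κ, κ*) = κ* − κ*²/2 + ((1 − κ*)²/2) ∫_{max(0, ω̃(κ))}^{2} x² dσ(x). Then α_inter(κ, κ*) = (1/2)(1/2 + κ* − κ*²/2) if and only if κ ≥ (1 + κ*)/2, and κ ↦ α_inter(κ, κ*) is strictly increasing on (κ*, (1 + κ*)/2]. -/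
open Set Real intervalIntegral MeasureTheory


lemma sc_sqrt4 : Real.sqrt 4 = 2 := by
  rw [show (4:ℝ) = 2^2 by norm_num, Real.sqrt_sq (by norm_num : (0:ℝ) ≤ 2)]

lemma sc_deriv1 {x : ℝ} (hx : x ∈ Set.Ioo (-2:ℝ) 2) :
    HasDerivAt (fun y : ℝ => y * Real.sqrt (4 - y^2) / 2 + 2 * Real.arcsin (y/2))
      (Real.sqrt (4 - x^2)) x := by
  have h4 : 0 < 4 - x^2 := by nlinarith [hx.1, hx.2]
  have hspos : 0 < Real.sqrt (4 - x^2) := Real.sqrt_pos.2 h4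
  have hssq : Real.sqrt (4 - x^2)^2 = 4 - x^2 := Real.sq_sqrt h4.le
  have hinner : HasDerivAt (fun y : ℝ => 4 - y^2) (-(2*x)) x := by
    simpa using ((hasDerivAt_pow 2 x).const_sub 4)
  have hsqrt : HasDerivAt (fun y : ℝ => Real.sqrt (4 - y^2))
      (1/(2*Real.sqrt (4 - x^2)) * (-(2*x))) x :=
    (Real.hasDerivAt_sqrt (ne_of_gt h4)).comp x hinner
  have hmul : HasDerivAt (fun y : ℝ => y * Real.sqrt (4 - y^2) / 2)
      ((1 * Real.sqrt (4 - x^2) + x * (1/(2*Real.sqrt (4 - x^2)) * (-(2*x)))) / 2) x :=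
    ((hasDerivAt_id x).mul hsqrt).div_const 2
  have h1 : (x:ℝ)/2 ≠ -1 := by intro h; rw [div_eq_iff (by norm_num : (2:ℝ) ≠ 0)] at h; nlinarith [hx.1]
  have h2 : (x:ℝ)/2 ≠ 1 := by intro h; rw [div_eq_iff (by norm_num : (2:ℝ) ≠ 0)] at h; nlinarith [hx.2]
  have harc : HasDerivAt (fun y : ℝ => 2 * Real.arcsin (y/2))
      (2 * (1 / Real.sqrt (1 - (x/2)^2) * (1/2))) x := by
    have hd : HasDerivAt (fun y : ℝ => y/2) (1/2 : ℝ) x := by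
      simpa using (hasDerivAt_id x).div_const 2
    have := (Real.hasDerivAt_arcsin h1 h2).comp x hd
    exact this.const_mul 2
  have hteq : Real.sqrt (1 - (x/2)^2) = Real.sqrt (4 - x^2) / 2 := by
    rw [show (1 - (x/2)^2 : ℝ) = (4 - x^2)/4 by ring, Real.sqrt_div h4.le, sc_sqrt4]
  have hsum := hmul.add harc
  refine hsum.congr_deriv ?_
  symm
  rw [hteq]
  field_simp
  nlinarith [hssq]

lemma sc_deriv2 {x : ℝ} (hx : x ∈ Set.Ioo (-2:ℝ) 2) :
    HasDerivAt (fun y : ℝ => (2*y^3 - 4*y) * Real.sqrt (4 - y^2) / 8 + 2 * Real.arcsin (y/2))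
      (x^2 * Real.sqrt (4 - x^2)) x := by
  have h4 : 0 < 4 - x^2 := by nlinarith [hx.1, hx.2]
  have hspos : 0 < Real.sqrt (4 - x^2) := Real.sqrt_pos.2 h4
  have hssq : Real.sqrt (4 - x^2)^2 = 4 - x^2 := Real.sq_sqrt h4.le
  have hinner : HasDerivAt (fun y : ℝ => 4 - y^2) (-(2*x)) x := by
    simpa using ((hasDerivAt_pow 2 x).const_sub 4)
  have hsqrt : HasDerivAt (fun y : ℝ => Real.sqrt (4 - y^2))
      (1/(2*Real.sqrt (4 - x^2)) * (-(2*x))) x :=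
    (Real.hasDerivAt_sqrt (ne_of_gt h4)).comp x hinner
  have hp : HasDerivAt (fun y : ℝ => 2*y^3 - 4*y) (6*x^2 - 4) x := by
    have := ((hasDerivAt_pow 3 x).const_mul 2).sub ((hasDerivAt_id x).const_mul 4)
    exact this.congr_deriv (by simp; ring)
  have hmul : HasDerivAt (fun y : ℝ => (2*y^3 - 4*y) * Real.sqrt (4 - y^2) / 8)
      (((6*x^2 - 4) * Real.sqrt (4 - x^2)
        + (2*x^3 - 4*x) * (1/(2*Real.sqrt (4 - x^2)) * (-(2*x)))) / 8) x :=
    (hp.mul hsqrt).div_const 8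
  have h1 : (x:ℝ)/2 ≠ -1 := by intro h; rw [div_eq_iff (by norm_num : (2:ℝ) ≠ 0)] at h; nlinarith [hx.1]
  have h2 : (x:ℝ)/2 ≠ 1 := by intro h; rw [div_eq_iff (by norm_num : (2:ℝ) ≠ 0)] at h; nlinarith [hx.2]
  have harc : HasDerivAt (fun y : ℝ => 2 * Real.arcsin (y/2))
      (2 * (1 / Real.sqrt (1 - (x/2)^2) * (1/2))) x := by
    have hd : HasDerivAt (fun y : ℝ => y/2) (1/2 : ℝ) x := by
      simpa using (hasDerivAt_id x).div_const 2
    exact ((Real.hasDerivAt_arcsin h1 h2).comp x hd).const_mul 2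
  have hteq : Real.sqrt (1 - (x/2)^2) = Real.sqrt (4 - x^2) / 2 := by
    rw [show (1 - (x/2)^2 : ℝ) = (4 - x^2)/4 by ring, Real.sqrt_div h4.le, sc_sqrt4]
  have hsum := hmul.add harc
  refine hsum.congr_deriv ?_
  symm
  rw [hteq]
  field_simp
  linear_combination (2*x^2+4) * hssq

lemma sc_cont1 : Continuous (fun y : ℝ => y * Real.sqrt (4 - y^2) / 2 + 2 * Real.arcsin (y/2)) := by
  exact ((continuous_id.mul (Real.continuous_sqrt.comp (by fun_prop))).div_const 2).add
    (continuous_const.mul (Real.continuous_arcsin.comp (by fun_prop)))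

lemma sc_cont2 : Continuous
    (fun y : ℝ => (2*y^3 - 4*y) * Real.sqrt (4 - y^2) / 8 + 2 * Real.arcsin (y/2)) := by
  exact (((by fun_prop : Continuous (fun y : ℝ => 2*y^3 - 4*y)).mul
    (Real.continuous_sqrt.comp (by fun_prop))).div_const 8).add
    (continuous_const.mul (Real.continuous_arcsin.comp (by fun_prop)))

lemma sc_int1 : ∫ x in (0:ℝ)..2, Real.sqrt (4 - x^2) = Real.pi := by
  have h := intervalIntegral.integral_eq_sub_of_hasDeriv_right_of_le
    (f := fun y : ℝ => y * Real.sqrt (4 - y^2) / 2 + 2 * Real.arcsin (y/2))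
    (f' := fun y : ℝ => Real.sqrt (4 - y^2))
    (by norm_num : (0:ℝ) ≤ 2) (sc_cont1.continuousOn)
    (fun x hx => (sc_deriv1 ⟨by linarith [hx.1], hx.2⟩).hasDerivWithinAt)
    ((Continuous.intervalIntegrable (by fun_prop) 0 2))
  rw [h]
  norm_num [Real.arcsin_one, Real.arcsin_zero, Real.sqrt_zero,
    show (4:ℝ) - 2^2 = 0 by norm_num]
  ring

lemma sc_int2 : ∫ x in (0:ℝ)..2, x^2 * Real.sqrt (4 - x^2) = Real.pi := by
  have h := intervalIntegral.integral_eq_sub_of_hasDeriv_right_of_le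
    (f := fun y : ℝ => (2*y^3 - 4*y) * Real.sqrt (4 - y^2) / 8 + 2 * Real.arcsin (y/2))
    (f' := fun y : ℝ => y^2 * Real.sqrt (4 - y^2))
    (by norm_num : (0:ℝ) ≤ 2) (sc_cont2.continuousOn)
    (fun x hx => (sc_deriv2 ⟨by linarith [hx.1], hx.2⟩).hasDerivWithinAt)
    ((Continuous.intervalIntegrable (by fun_prop) 0 2))
  rw [h]
  norm_num [Real.arcsin_one, Real.arcsin_zero, Real.sqrt_zero,
    show (4:ℝ) - 2^2 = 0 by norm_num]
  ring

lemma sc_intf (a b : ℝ) : IntervalIntegrable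
    (fun x : ℝ => Real.sqrt (4 - x ^ 2) / (2 * Real.pi)) volume a b :=
  Continuous.intervalIntegrable ((Real.continuous_sqrt.comp (by fun_prop)).div_const _) a b

lemma sc_intg (a b : ℝ) : IntervalIntegrable
    (fun x : ℝ => x ^ 2 * (Real.sqrt (4 - x ^ 2) / (2 * Real.pi))) volume a b :=
  Continuous.intervalIntegrable
    ((continuous_pow 2).mul ((Real.continuous_sqrt.comp (by fun_prop)).div_const _)) a b


lemma sc_f_half : ∫ x in (0:ℝ)..2, Real.sqrt (4 - x ^ 2) / (2 * Real.pi) = 1/2 := by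
  rw [intervalIntegral.integral_div, sc_int1]
  have : Real.pi ≠ 0 := Real.pi_ne_zero
  field_simp

lemma sc_g_half : ∫ x in (0:ℝ)..2, x ^ 2 * (Real.sqrt (4 - x ^ 2) / (2 * Real.pi)) = 1/2 := by
  have h : (fun x : ℝ => x ^ 2 * (Real.sqrt (4 - x ^ 2) / (2 * Real.pi)))
      = fun x : ℝ => (x ^ 2 * Real.sqrt (4 - x ^ 2)) / (2 * Real.pi) := by
    funext x; ring
  rw [h, intervalIntegral.integral_div, sc_int2]
  have : Real.pi ≠ 0 := Real.pi_ne_zero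
  field_simp

lemma sc_f_pos {a b : ℝ} (ha : -2 ≤ a) (hab : a < b) (hb : b ≤ 2) :
    0 < ∫ x in a..b, Real.sqrt (4 - x ^ 2) / (2 * Real.pi) := by
  apply intervalIntegral_pos_of_pos_on (sc_intf a b) _ hab
  intro x hx
  have h4 : 0 < 4 - x ^ 2 := by nlinarith [hx.1, hx.2]
  exact div_pos (Real.sqrt_pos.2 h4) (by positivity)

lemma sc_g_pos {a b : ℝ} (ha : 0 ≤ a) (hab : a < b) (hb : b ≤ 2) :
    0 < ∫ x in a..b, x ^ 2 * (Real.sqrt (4 - x ^ 2) / (2 * Real.pi)) := by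
  apply intervalIntegral_pos_of_pos_on (sc_intg a b) _ hab
  intro x hx
  have h4 : 0 < 4 - x ^ 2 := by nlinarith [hx.1, hx.2]
  have hx0 : 0 < x := lt_of_le_of_lt ha hx.1
  exact mul_pos (by positivity) (div_pos (Real.sqrt_pos.2 h4) (by positivity))

lemma sc_f_nonneg (a b : ℝ) (hab : a ≤ b) :
    0 ≤ ∫ x in a..b, Real.sqrt (4 - x ^ 2) / (2 * Real.pi) :=
  intervalIntegral.integral_nonneg hab (fun x _ => by positivity)

/-- **Behavior of the interpolation threshold in the student width.** Let `σ` be the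
standard semicircle distribution on `[-2, 2]` (density `x ↦ √(4 - x²)/(2π)`). Fix
`κ* ∈ (0, 1)` and, for `κ ∈ (κ*, 1]`, let `ω̃(κ) ∈ [-2, 2]` be the solution of
`σ([ω̃(κ), 2]) = (κ - κ*)/(1 - κ*)`. Define the interpolation threshold
`α_inter(κ, κ*) = κ* - κ*²/2 + ((1 - κ*)²/2) ∫_{max(0, ω̃(κ))}^{2} x² dσ(x)`. Then
`α_inter(κ, κ*) = (1/2)(1/2 + κ* - κ*²/2)` iff `κ ≥ (1 + κ*)/2`, and
`κ ↦ α_inter(κ, κ*)` is strictly increasing on `(κ*, (1 + κ*)/2]`. -/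
theorem interpolation_threshold_constant_iff_and_strict_mono
    (ks : ℝ) (hks : ks ∈ Ioo (0 : ℝ) 1)
    (w : ℝ → ℝ)
    (hw : ∀ k ∈ Ioc ks 1, w k ∈ Icc (-2 : ℝ) 2 ∧
      (∫ x in (w k)..2, Real.sqrt (4 - x ^ 2) / (2 * Real.pi)) = (k - ks) / (1 - ks)) :
    (∀ k ∈ Ioc ks 1,
      (ks - ks ^ 2 / 2 + ((1 - ks) ^ 2 / 2) *
          ∫ x in (max 0 (w k))..2, x ^ 2 * (Real.sqrt (4 - x ^ 2) / (2 * Real.pi)))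
        = (1 / 2) * (1 / 2 + ks - ks ^ 2 / 2) ↔ (1 + ks) / 2 ≤ k) ∧
    StrictMonoOn
      (fun k => ks - ks ^ 2 / 2 + ((1 - ks) ^ 2 / 2) *
          ∫ x in (max 0 (w k))..2, x ^ 2 * (Real.sqrt (4 - x ^ 2) / (2 * Real.pi)))
      (Ioc ks ((1 + ks) / 2)) := by
  obtain ⟨hks0, hks1⟩ := hks
  have h1ks : 0 < 1 - ks := by linarith
  -- w k < 2 on the whole domain
  have hwlt2 : ∀ k ∈ Ioc ks 1, w k < 2 := by
    intro k hk
    obtain ⟨hmem, heq⟩ := hw k hk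
    rcases lt_or_eq_of_le hmem.2 with h | h
    · exact h
    · exfalso
      rw [h] at heq
      simp only [intervalIntegral.integral_same] at heq
      have hpos : 0 < (k - ks) / (1 - ks) := div_pos (by linarith [hk.1]) h1ks
      linarith
  -- if k ≤ (1+ks)/2 then 0 ≤ w k
  have hwge0 : ∀ k ∈ Ioc ks 1, k ≤ (1 + ks) / 2 → 0 ≤ w k := by
    intro k hk hkle
    obtain ⟨hmem, heq⟩ := hw k hk
    by_contra h
    push_neg at h
    have hsplit := intervalIntegral.integral_add_adjacent_intervals
      (sc_intf (w k) 0) (sc_intf 0 2)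
    have hpos0 : 0 < ∫ x in (w k)..0, Real.sqrt (4 - x ^ 2) / (2 * Real.pi) :=
      sc_f_pos hmem.1 h (by norm_num)
    have hle : (k - ks) / (1 - ks) ≤ 1/2 := by
      rw [div_le_iff₀ h1ks]; linarith
    have hhalf := sc_f_half
    linarith
  -- if (1+ks)/2 ≤ k then w k ≤ 0
  have hwle0 : ∀ k ∈ Ioc ks 1, (1 + ks) / 2 ≤ k → w k ≤ 0 := by
    intro k hk hkge
    obtain ⟨hmem, heq⟩ := hw k hk
    by_contra h
    push_neg at h
    have hsplit := intervalIntegral.integral_add_adjacent_intervals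
      (sc_intf 0 (w k)) (sc_intf (w k) 2)
    have hpos0 : 0 < ∫ x in (0:ℝ)..(w k), Real.sqrt (4 - x ^ 2) / (2 * Real.pi) :=
      sc_f_pos (by norm_num) h hmem.2
    have hge : 1/2 ≤ (k - ks) / (1 - ks) := by
      rw [le_div_iff₀ h1ks]; linarith
    have hhalf := sc_f_half
    linarith
  -- if k < (1+ks)/2 then 0 < w k
  have hwpos : ∀ k ∈ Ioc ks 1, k < (1 + ks) / 2 → 0 < w k := by
    intro k hk hklt
    obtain ⟨hmem, heq⟩ := hw k hk
    by_contra h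
    push_neg at h
    have hsplit := intervalIntegral.integral_add_adjacent_intervals
      (sc_intf (w k) 0) (sc_intf 0 2)
    have hnn : 0 ≤ ∫ x in (w k)..0, Real.sqrt (4 - x ^ 2) / (2 * Real.pi) :=
      sc_f_nonneg _ _ h
    have hlt : (k - ks) / (1 - ks) < 1/2 := by
      rw [div_lt_iff₀ h1ks]; linarith
    have hhalf := sc_f_half
    linarith
  -- when k < (1+ks)/2, the g-integral is strictly below 1/2
  have hkey : ∀ k ∈ Ioc ks 1, k < (1 + ks) / 2 →
      (∫ x in (max 0 (w k))..2, x ^ 2 * (Real.sqrt (4 - x ^ 2) / (2 * Real.pi))) < 1/2 := by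
    intro k hk hklt
    obtain ⟨hmem, heq⟩ := hw k hk
    have hwk : 0 < w k := hwpos k hk hklt
    have hmax : max 0 (w k) = w k := max_eq_right hwk.le
    rw [hmax]
    have hsplit := intervalIntegral.integral_add_adjacent_intervals
      (sc_intg 0 (w k)) (sc_intg (w k) 2)
    have hpos0 : 0 < ∫ x in (0:ℝ)..(w k), x ^ 2 * (Real.sqrt (4 - x ^ 2) / (2 * Real.pi)) :=
      sc_g_pos le_rfl hwk hmem.2
    have hhalf := sc_g_half
    linarith
  constructor
  · intro k hk
    constructor
    · intro hα
      by_contra h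
      push_neg at h
      have hlt := hkey k hk h
      have hc : 0 < (1 - ks) ^ 2 / 2 := by positivity
      nlinarith
    · intro hge
      have hle0 : w k ≤ 0 := hwle0 k hk hge
      have hmax : max 0 (w k) = 0 := max_eq_left hle0
      rw [hmax, sc_g_half]
      ring
  · intro k1 hk1 k2 hk2 h12
    have hsub : (1 + ks) / 2 ≤ 1 := by linarith
    have hk1' : k1 ∈ Ioc ks 1 := ⟨hk1.1, le_trans hk1.2 hsub⟩
    have hk2' : k2 ∈ Ioc ks 1 := ⟨hk2.1, le_trans hk2.2 hsub⟩
    obtain ⟨hm1, he1⟩ := hw k1 hk1'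
    obtain ⟨hm2, he2⟩ := hw k2 hk2'
    have hw2ge : 0 ≤ w k2 := hwge0 k2 hk2' hk2.2
    have hw1lt2 : w k1 < 2 := hwlt2 k1 hk1'
    have hlt : w k2 < w k1 := by
      by_contra h
      push_neg at h
      have hsplit := intervalIntegral.integral_add_adjacent_intervals
        (sc_intf (w k1) (w k2)) (sc_intf (w k2) 2)
      have hnn : 0 ≤ ∫ x in (w k1)..(w k2), Real.sqrt (4 - x ^ 2) / (2 * Real.pi) :=
        sc_f_nonneg _ _ h
      have ha : (k1 - ks) / (1 - ks) < (k2 - ks) / (1 - ks) :=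
        (div_lt_div_iff_of_pos_right h1ks).2 (by linarith)
      linarith
    have hmax1 : max 0 (w k1) = w k1 := max_eq_right (le_of_lt (lt_of_le_of_lt hw2ge hlt))
    have hmax2 : max 0 (w k2) = w k2 := max_eq_right hw2ge
    have hsplit := intervalIntegral.integral_add_adjacent_intervals
      (sc_intg (w k2) (w k1)) (sc_intg (w k1) 2)
    have hpos : 0 < ∫ x in (w k2)..(w k1), x ^ 2 * (Real.sqrt (4 - x ^ 2) / (2 * Real.pi)) :=
      sc_g_pos hw2ge hlt hw1lt2.le
    have hc : 0 < (1 - ks) ^ 2 / 2 := by positivity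
    simp only [hmax1, hmax2]
    nlinarith
end
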